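/- Let Q_1,...,Q_N ∈ ℝ^{d×d} be symmetric positive definite and pairwise commuting, and G_i = (∑_{k=1}^N Q_k) Q_i^{-1}. Then ‖∑_{i=1}^N x_i‖² ≤ ∑_{i=1}^N ⟨x_i, G_i x_i⟩ for all (x_1,...,x_N) ∈ (ℝ^d)^N, with equality if and only if there exists v ∈ ℝ^d with x_i = Q_i v for all i. -/

import Mathlib

open scoped BigOperators
open Matrix

section aux

variable {d : ℕ}

private lemma sumMulVec {N : ℕ} (M : Fin N → Matrix (Fin d) (Fin d) ℝ) (y : Fin d → ℝ) :
    (∑ k, M k) *ᵥ y = ∑ k, (M k) *ᵥ y := by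
  ext i
  simp [Matrix.mulVec, dotProduct, Matrix.sum_apply, Finset.sum_mul, Finset.sum_apply]
  exact Finset.sum_comm

private lemma dotSum {N : ℕ} (x : Fin d → ℝ) (f : Fin N → Fin d → ℝ) :
    x ⬝ᵥ (∑ k, f k) = ∑ k, x ⬝ᵥ f k := by
  simp [dotProduct, Finset.mul_sum, Finset.sum_apply]
  exact Finset.sum_comm

private lemma sumDot {N : ℕ} (x : Fin d → ℝ) (f : Fin N → Fin d → ℝ) :
    (∑ k, f k) ⬝ᵥ x = ∑ k, f k ⬝ᵥ x := by
  simp [dotProduct, Finset.sum_mul, Finset.sum_apply]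
  exact Finset.sum_comm

private lemma symmDot {A : Matrix (Fin d) (Fin d) ℝ} (hA : Aᵀ = A) (y z : Fin d → ℝ) :
    (A *ᵥ y) ⬝ᵥ z = y ⬝ᵥ (A *ᵥ z) := by
  rw [Matrix.dotProduct_mulVec, ← Matrix.mulVec_transpose, hA, dotProduct_comm]

private lemma mul_posDef_of_commute {A B : Matrix (Fin d) (Fin d) ℝ}
    (hA : A.PosDef) (hB : B.PosDef) (h : A * B = B * A) : (A * B).PosDef := by
  have hherm : (A * B).IsHermitian := by
    rw [Matrix.IsHermitian, conjTranspose_mul, hA.isHermitian, hB.isHermitian, h]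
  have heig : ∀ j, 0 < hherm.eigenvalues j := by
    intro j
    set u : Fin d → ℝ := ⇑(hherm.eigenvectorBasis j) with hu
    have hmv : (A * B) *ᵥ u = hherm.eigenvalues j • u := hherm.mulVec_eigenvectorBasis j
    have hune : u ≠ 0 := by
      intro h0
      have := hherm.eigenvectorBasis.toBasis.ne_zero j
      apply this
      ext i
      exact congrFun h0 i
    have hBu : B *ᵥ u ≠ 0 := by
      intro h0
      apply hune
      have : B⁻¹ *ᵥ (B *ᵥ u) = B⁻¹ *ᵥ 0 := by rw [h0]
      rwa [Matrix.mulVec_mulVec, Matrix.nonsing_inv_mul _ (isUnit_iff_ne_zero.mpr hB.det_pos.ne'),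
        Matrix.one_mulVec, Matrix.mulVec_zero] at this
    have h1 : 0 < (B *ᵥ u) ⬝ᵥ (A *ᵥ (B *ᵥ u)) := by
      have := hA.dotProduct_mulVec_pos hBu
      simpa using this
    have h2 : 0 < u ⬝ᵥ (B *ᵥ u) := by
      have := hB.dotProduct_mulVec_pos hune
      simpa using this
    have h3 : (B *ᵥ u) ⬝ᵥ (A *ᵥ (B *ᵥ u)) = hherm.eigenvalues j * (u ⬝ᵥ (B *ᵥ u)) := by
      rw [Matrix.mulVec_mulVec, hmv, dotProduct_smul, dotProduct_comm]
      simp [smul_eq_mul]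
    rw [h3] at h1
    nlinarith [h1, h2]
  have hsd : (A * B).PosSemidef := hherm.posSemidef_iff_eigenvalues_nonneg.mpr fun j => (heig j).le
  refine PosDef.of_dotProduct_mulVec_pos hherm fun z hz => ?_
  have hnz : (A * B) *ᵥ z ≠ 0 := by
    intro h0
    apply hz
    have : (A * B)⁻¹ *ᵥ ((A * B) *ᵥ z) = 0 := by rw [h0, Matrix.mulVec_zero]
    have hdet : IsUnit (A * B).det := by
      rw [Matrix.det_mul]
      exact isUnit_iff_ne_zero.mpr (mul_ne_zero hA.det_pos.ne' hB.det_pos.ne')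
    rwa [Matrix.mulVec_mulVec, Matrix.nonsing_inv_mul _ hdet, Matrix.one_mulVec] at this
  have h0 : z ⬝ᵥ ((A * B) *ᵥ z) ≠ 0 := by
    intro hzz
    exact hnz ((hsd.dotProduct_mulVec_zero_iff z).mp (by simpa using hzz))
  have h1 : 0 ≤ z ⬝ᵥ ((A * B) *ᵥ z) := by
    have := hsd.re_dotProduct_nonneg z
    simpa using this
  rw [show star z = z from star_trivial z]
  exact lt_of_le_of_ne h1 (Ne.symm h0)

end aux

theorem norm_sq_splitting_for_commuting_posdef
    {d N : ℕ} (hN : 2 ≤ N) (Q : Fin N → Matrix (Fin d) (Fin d) ℝ)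
    (hsymm : ∀ i, (Q i).IsSymm) (hpos : ∀ i, (Q i).PosDef)
    (hcomm : ∀ i j, Q i * Q j = Q j * Q i)
    (G : Fin N → Matrix (Fin d) (Fin d) ℝ)
    (hG : ∀ i, G i = (∑ k, Q k) * (Q i)⁻¹)
    (x : Fin N → Fin d → ℝ) :
    ((∑ i, x i) ⬝ᵥ (∑ i, x i)) ≤ ∑ i, x i ⬝ᵥ (G i).mulVec (x i) ∧
      (((∑ i, x i) ⬝ᵥ (∑ i, x i)) = ∑ i, x i ⬝ᵥ (G i).mulVec (x i) ↔
        ∃ v : Fin d → ℝ, ∀ i, x i = (Q i).mulVec v) := by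
  have hQd : ∀ i, IsUnit (Q i).det := fun i => isUnit_iff_ne_zero.mpr (hpos i).det_pos.ne'
  set a : Fin N → Fin d → ℝ := fun i => (Q i)⁻¹ *ᵥ x i with ha
  have hxa : ∀ i, Q i *ᵥ a i = x i := by
    intro i
    show Q i *ᵥ ((Q i)⁻¹ *ᵥ x i) = x i
    rw [Matrix.mulVec_mulVec, Matrix.mul_nonsing_inv _ (hQd i), Matrix.one_mulVec]
  have pairform : ∀ i j (y z : Fin d → ℝ),
      (Q i *ᵥ y) ⬝ᵥ (Q j *ᵥ z) = y ⬝ᵥ ((Q i * Q j) *ᵥ z) := by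
    intro i j y z
    rw [symmDot (hsymm i), Matrix.mulVec_mulVec]
  have hsum1 : ∑ i, x i ⬝ᵥ (G i) *ᵥ x i = ∑ i, ∑ j, a i ⬝ᵥ ((Q i * Q j) *ᵥ a i) := by
    refine Finset.sum_congr rfl fun i _ => ?_
    rw [hG i, ← Matrix.mulVec_mulVec, show (Q i)⁻¹ *ᵥ x i = a i from rfl,
      sumMulVec, dotSum]
    refine Finset.sum_congr rfl fun j _ => ?_
    rw [← hxa i, pairform]
  have hsum2 : (∑ i, x i) ⬝ᵥ (∑ i, x i) = ∑ i, ∑ j, a i ⬝ᵥ ((Q i * Q j) *ᵥ a j) := by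
    rw [sumDot]
    refine Finset.sum_congr rfl fun i _ => ?_
    rw [dotSum]
    refine Finset.sum_congr rfl fun j _ => ?_
    rw [← hxa i, ← hxa j, pairform]
  have expand : ∀ i j, (a i - a j) ⬝ᵥ ((Q i * Q j) *ᵥ (a i - a j)) =
      a i ⬝ᵥ ((Q i * Q j) *ᵥ a i) + a j ⬝ᵥ ((Q i * Q j) *ᵥ a j)
      - a i ⬝ᵥ ((Q i * Q j) *ᵥ a j) - a j ⬝ᵥ ((Q i * Q j) *ᵥ a i) := by
    intro i j
    rw [Matrix.mulVec_sub, dotProduct_sub, sub_dotProduct, sub_dotProduct]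
    ring
  have swap1 : ∑ i, ∑ j, a j ⬝ᵥ ((Q i * Q j) *ᵥ a j) = ∑ i, ∑ j, a i ⬝ᵥ ((Q i * Q j) *ᵥ a i) := by
    rw [Finset.sum_comm]
    exact Finset.sum_congr rfl fun i _ => Finset.sum_congr rfl fun j _ => by rw [hcomm j i]
  have swap2 : ∑ i, ∑ j, a j ⬝ᵥ ((Q i * Q j) *ᵥ a i) = ∑ i, ∑ j, a i ⬝ᵥ ((Q i * Q j) *ᵥ a j) := by
    rw [Finset.sum_comm]
    exact Finset.sum_congr rfl fun i _ => Finset.sum_congr rfl fun j _ => by rw [hcomm j i]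
  have key : ∑ i, ∑ j, (a i - a j) ⬝ᵥ ((Q i * Q j) *ᵥ (a i - a j))
      = 2 * (∑ i, x i ⬝ᵥ (G i) *ᵥ x i) - 2 * ((∑ i, x i) ⬝ᵥ (∑ i, x i)) := by
    have e1 : ∑ i, ∑ j, (a i - a j) ⬝ᵥ ((Q i * Q j) *ᵥ (a i - a j))
        = (∑ i, ∑ j, a i ⬝ᵥ ((Q i * Q j) *ᵥ a i)) + (∑ i, ∑ j, a j ⬝ᵥ ((Q i * Q j) *ᵥ a j))
          - (∑ i, ∑ j, a i ⬝ᵥ ((Q i * Q j) *ᵥ a j))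
          - (∑ i, ∑ j, a j ⬝ᵥ ((Q i * Q j) *ᵥ a i)) := by
      simp only [expand, Finset.sum_sub_distrib, Finset.sum_add_distrib]
    rw [e1, swap1, swap2, hsum1, hsum2]
    ring
  have hterm_nonneg : ∀ i j, 0 ≤ (a i - a j) ⬝ᵥ ((Q i * Q j) *ᵥ (a i - a j)) := by
    intro i j
    have hp := (mul_posDef_of_commute (hpos i) (hpos j) (hcomm i j)).posSemidef
    simpa using hp.re_dotProduct_nonneg (a i - a j)
  have hT_nonneg : 0 ≤ ∑ i, ∑ j, (a i - a j) ⬝ᵥ ((Q i * Q j) *ᵥ (a i - a j)) :=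
    Finset.sum_nonneg fun i _ => Finset.sum_nonneg fun j _ => hterm_nonneg i j
  constructor
  · linarith [key, hT_nonneg]
  constructor
  · intro heq
    have hT0 : ∑ i, ∑ j, (a i - a j) ⬝ᵥ ((Q i * Q j) *ᵥ (a i - a j)) = 0 := by
      linarith [key]
    have hzero : ∀ i j, a i = a j := by
      intro i j
      have h1 := (Finset.sum_eq_zero_iff_of_nonneg
        (fun i _ => Finset.sum_nonneg fun j _ => hterm_nonneg i j)).mp hT0 i (Finset.mem_univ i)
      have h2 := (Finset.sum_eq_zero_iff_of_nonneg
        (fun j _ => hterm_nonneg i j)).mp h1 j (Finset.mem_univ j)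
      by_contra hne
      have hsub : a i - a j ≠ 0 := sub_ne_zero.mpr hne
      have hp := mul_posDef_of_commute (hpos i) (hpos j) (hcomm i j)
      have := hp.dotProduct_mulVec_pos hsub
      rw [show star (a i - a j) = a i - a j from star_trivial _] at this
      linarith [this, h2.le, h2.ge]
    refine ⟨a ⟨0, by omega⟩, fun i => ?_⟩
    rw [← hxa i, hzero i ⟨0, by omega⟩]
  · rintro ⟨v, hv⟩
    have hav : ∀ i, a i = v := by
      intro i
      show (Q i)⁻¹ *ᵥ x i = v
      rw [hv i, show (Q i).mulVec v = Q i *ᵥ v from rfl, Matrix.mulVec_mulVec,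
        Matrix.nonsing_inv_mul _ (hQd i), Matrix.one_mulVec]
    have hT0 : ∑ i, ∑ j, (a i - a j) ⬝ᵥ ((Q i * Q j) *ᵥ (a i - a j)) = 0 := by
      refine Finset.sum_eq_zero fun i _ => Finset.sum_eq_zero fun j _ => ?_
      simp [hav]
    linarith [key]
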